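/- Suppose v̂ ∈ ℝᵐ is a centered point for parameter μ > 0. Then for all v ∈ ℝᵐ, the Newton direction d = d(v,μ) satisfies ‖d‖² ≤ h(v̂, v)·(1 + ‖d‖). -/

import Mathlib

open Matrix

/-- Elementwise exponentiation `e^v` of a vector. -/
noncomputable def expV {m : ℕ} (v : Fin m → ℝ) : Fin m → ℝ := fun i => Real.exp (v i)

/-- The log-domain Newton system: `(d, x)` satisfies
`√μ·Aᵀ(eᵛ + eᵛ∘d) = Wx + c` and `√μ·(e^{−v} − e^{−v}∘d) = Ax + b`. -/
noncomputable def IsNewton {m n : ℕ} (A : Matrix (Fin m) (Fin n) ℝ) (b : Fin m → ℝ)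
    (c : Fin n → ℝ) (W : Matrix (Fin n) (Fin n) ℝ) (μ : ℝ) (v d : Fin m → ℝ)
    (x : Fin n → ℝ) : Prop :=
  Real.sqrt μ • (Aᵀ).mulVec (expV v + expV v * d) = W.mulVec x + c ∧
  Real.sqrt μ • (expV (-v) - expV (-v) * d) = A.mulVec x + b

/-- `v` is a centered point for parameter `μ`, witnessed by `x`:
`√μ·Aᵀeᵛ = Wx + c` and `√μ·e^{−v} = Ax + b`. -/
noncomputable def IsCentered {m n : ℕ} (A : Matrix (Fin m) (Fin n) ℝ) (b : Fin m → ℝ)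
    (c : Fin n → ℝ) (W : Matrix (Fin n) (Fin n) ℝ) (μ : ℝ) (v : Fin m → ℝ)
    (x : Fin n → ℝ) : Prop :=
  Real.sqrt μ • (Aᵀ).mulVec (expV v) = W.mulVec x + c ∧
  Real.sqrt μ • expV (-v) = A.mulVec x + b

/-- The divergence `h(u,v) := ⟨eᵘ, e^{−v}⟩ + ⟨e^{−u}, eᵛ⟩ − 2m`. -/
noncomputable def diverg {m : ℕ} (u v : Fin m → ℝ) : ℝ :=
  (∑ i, Real.exp (u i) * Real.exp (-v i)) + (∑ i, Real.exp (-u i) * Real.exp (v i))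
    - 2 * m

/-- The Euclidean norm of a vector in `ℝᵐ`. -/
noncomputable def enorm' {m : ℕ} (d : Fin m → ℝ) : ℝ := Real.sqrt (∑ i, d i ^ 2)

/-- Per-coordinate divergence contribution. -/
noncomputable def hhF {m : ℕ} (u v : Fin m → ℝ) : Fin m → ℝ :=
  fun i => Real.exp (u i - v i) + Real.exp (v i - u i) - 2

/-- Per-coordinate skew term. -/
noncomputable def ggF {m : ℕ} (u v : Fin m → ℝ) : Fin m → ℝ :=
  fun i => Real.exp (u i - v i) - Real.exp (v i - u i)

lemma hhF_nonneg {m : ℕ} (u v : Fin m → ℝ) (i : Fin m) : 0 ≤ hhF u v i := by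
  have hab : Real.exp (u i - v i) * Real.exp (v i - u i) = 1 := by
    rw [← Real.exp_add]; norm_num
  have h1 := Real.exp_pos (u i - v i)
  have h2 := Real.exp_pos (v i - u i)
  unfold hhF
  nlinarith [sq_nonneg (Real.exp (u i - v i) - 1)]

lemma ggF_sq {m : ℕ} (u v : Fin m → ℝ) (i : Fin m) :
    ggF u v i ^ 2 = hhF u v i ^ 2 + 4 * hhF u v i := by
  have hab : Real.exp (u i - v i) * Real.exp (v i - u i) = 1 := by
    rw [← Real.exp_add]; norm_num
  unfold ggF hhF
  linear_combination (-4 : ℝ) * hab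

/-- if `v̂` is centered for `μ > 0`, then for every `v` the Newton
direction `d = d(v,μ)` satisfies `‖d‖² ≤ h(v̂,v)·(1 + ‖d‖)` (Euclidean norm). -/
theorem stmt_9 {m n : ℕ} (A : Matrix (Fin m) (Fin n) ℝ) (b : Fin m → ℝ) (c : Fin n → ℝ)
    (W : Matrix (Fin n) (Fin n) ℝ) (hW : W.PosSemidef) (hAW : (Aᵀ * A + W).PosDef)
    (μ : ℝ) (hμ : 0 < μ) (vhat : Fin m → ℝ) (xhat : Fin n → ℝ)
    (hcent : IsCentered A b c W μ vhat xhat)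
    (v d : Fin m → ℝ) (x : Fin n → ℝ) (hd : IsNewton A b c W μ v d x) :
    enorm' d ^ 2 ≤ diverg vhat v * (1 + enorm' d) := by
  obtain ⟨hc1, hc2⟩ := hcent
  obtain ⟨hn1, hn2⟩ := hd
  -- abbreviations
  have h1 : Real.sqrt μ • (Aᵀ).mulVec (expV v + expV v * d - expV vhat)
      = W.mulVec (x - xhat) := by
    rw [Matrix.mulVec_sub, smul_sub, hn1, hc1, Matrix.mulVec_sub]; abel
  have h2 : Real.sqrt μ • ((expV (-v) - expV (-v) * d) - expV (-vhat))
      = A.mulVec (x - xhat) := by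
    rw [smul_sub, hn2, hc2, Matrix.mulVec_sub]; abel
  have hWu : 0 ≤ (x - xhat) ⬝ᵥ W.mulVec (x - xhat) := by
    simpa using hW.dotProduct_mulVec_nonneg (x - xhat)
  have e0 : (x - xhat) ⬝ᵥ W.mulVec (x - xhat)
      = μ * (((expV (-v) - expV (-v) * d) - expV (-vhat)) ⬝ᵥ
          (expV v + expV v * d - expV vhat)) := by
    rw [← h1, dotProduct_smul, smul_eq_mul, Matrix.dotProduct_mulVec,
      Matrix.vecMul_transpose, ← h2, smul_dotProduct, smul_eq_mul,
      ← mul_assoc, Real.mul_self_sqrt hμ.le]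
  have key : 0 ≤ ((expV (-v) - expV (-v) * d) - expV (-vhat)) ⬝ᵥ
      (expV v + expV v * d - expV vhat) := by
    nlinarith [hWu, e0]
  -- expand the dot product coordinatewise
  have per : ∀ i, ((expV (-v) - expV (-v) * d) - expV (-vhat)) i *
      (expV v + expV v * d - expV vhat) i
      = -(d i ^ 2) - hhF vhat v i + d i * ggF vhat v i := by
    intro i
    have hA : Real.exp (v i) * Real.exp (-v i) = 1 := by
      rw [← Real.exp_add]; norm_num
    have hB : Real.exp (vhat i) * Real.exp (-vhat i) = 1 := by
      rw [← Real.exp_add]; norm_num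
    have e1 : Real.exp (vhat i - v i) = Real.exp (vhat i) * Real.exp (-v i) := by
      rw [← Real.exp_add]; ring_nf
    have e2 : Real.exp (v i - vhat i) = Real.exp (v i) * Real.exp (-vhat i) := by
      rw [← Real.exp_add]; ring_nf
    simp only [Pi.sub_apply, Pi.add_apply, Pi.mul_apply, expV, Pi.neg_apply, hhF, ggF,
      e1, e2]
    linear_combination (1 - d i ^ 2) * hA + hB
  have hqp : ((expV (-v) - expV (-v) * d) - expV (-vhat)) ⬝ᵥ
      (expV v + expV v * d - expV vhat)
      = -(∑ i, d i ^ 2) - (∑ i, hhF vhat v i) + ∑ i, d i * ggF vhat v i := by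
    rw [dotProduct]
    rw [Finset.sum_congr rfl fun i _ => per i]
    rw [Finset.sum_add_distrib, Finset.sum_sub_distrib, Finset.sum_neg_distrib]
  have key2 : (∑ i, d i ^ 2) + (∑ i, hhF vhat v i) ≤ ∑ i, d i * ggF vhat v i := by
    rw [hqp] at key; linarith
  -- the divergence equals the sum of hhF
  have divh : diverg vhat v = ∑ i, hhF vhat v i := by
    unfold diverg hhF
    have e1 : ∀ i : Fin m, Real.exp (vhat i - v i)
        = Real.exp (vhat i) * Real.exp (-v i) := fun i => by
      rw [← Real.exp_add]; ring_nf
    have e2 : ∀ i : Fin m, Real.exp (v i - vhat i)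
        = Real.exp (-vhat i) * Real.exp (v i) := fun i => by
      rw [← Real.exp_add]; ring_nf
    simp only [e1, e2, Finset.sum_sub_distrib, Finset.sum_add_distrib,
      Finset.sum_const, Finset.card_univ, Fintype.card_fin, nsmul_eq_mul]
    ring
  -- Cauchy-Schwarz and sum bounds
  have CS : (∑ i, d i * ggF vhat v i) ^ 2
      ≤ (∑ i, d i ^ 2) * (∑ i, ggF vhat v i ^ 2) :=
    Finset.sum_mul_sq_le_sq_mul_sq _ _ _
  have hH0 : 0 ≤ ∑ i, hhF vhat v i :=
    Finset.sum_nonneg fun i _ => hhF_nonneg vhat v i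
  have sumg : ∑ i, ggF vhat v i ^ 2
      = (∑ i, hhF vhat v i ^ 2) + 4 * ∑ i, hhF vhat v i := by
    rw [Finset.sum_congr rfl fun i _ => ggF_sq vhat v i, Finset.sum_add_distrib,
      ← Finset.mul_sum]
  have sumhh2 : ∑ i, hhF vhat v i ^ 2 ≤ (∑ i, hhF vhat v i) ^ 2 :=
    Finset.sum_sq_le_sq_sum_of_nonneg fun i _ => hhF_nonneg vhat v i
  -- put everything together
  have hD0 : 0 ≤ ∑ i, d i ^ 2 := Finset.sum_nonneg fun i _ => sq_nonneg _
  have hE2 : enorm' d ^ 2 = ∑ i, d i ^ 2 := Real.sq_sqrt hD0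
  have hE0 : 0 ≤ enorm' d := Real.sqrt_nonneg _
  set E := enorm' d
  set H := ∑ i, hhF vhat v i
  set S := ∑ i, d i * ggF vhat v i
  have hS : E ^ 2 + H ≤ S := by rw [hE2]; exact key2
  have hS0 : 0 ≤ S := le_trans (by positivity) hS
  have hCS2 : S ^ 2 ≤ E ^ 2 * (H ^ 2 + 4 * H) := by
    calc S ^ 2 ≤ (∑ i, d i ^ 2) * (∑ i, ggF vhat v i ^ 2) := CS
      _ ≤ (∑ i, d i ^ 2) * (H ^ 2 + 4 * H) := by
          apply mul_le_mul_of_nonneg_left _ hD0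
          rw [sumg]; linarith
      _ = E ^ 2 * (H ^ 2 + 4 * H) := by rw [hE2]
  have hsq : (E ^ 2 + H) ^ 2 ≤ S ^ 2 := by nlinarith [hS, hS0]
  rw [divh]
  nlinarith [hsq, hCS2, mul_nonneg hE0 hH0, sq_nonneg (E * H), hE0, hH0]
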